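/- arXiv:quant-ph/0205033 — 2 statements merged into one kernel-verified Lean document; each statement's English description precedes it below -/
import Mathlib

section
/- Let ψ_A, ψ_B ∈ ℂ^n be unit vectors. Then C(|ψ_A⟩⟨ψ_A|, |ψ_B⟩⟨ψ_B|) = 1 if |⟨ψ_A, ψ_B⟩| = 1, and C(|ψ_A⟩⟨ψ_A|, |ψ_B⟩⟨ψ_B|) = 0 otherwise. -/
open Matrix BigOperators
open scoped ComplexOrder

/-- A density matrix: positive semidefinite with trace 1. -/
def IsDensityMatrix {d : Type*} [Fintype d] [DecidableEq d]
    (ρ : Matrix d d ℂ) : Prop :=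
  ρ.PosSemidef ∧ ρ.trace = 1

/-- The compatibility `C(ρA, ρB)`: the supremum, over all finite families of density
matrices `σ` and weight vectors `p`, `q` (nonnegative, summing to 1) with
`∑ i, p i • σ i = ρA` and `∑ i, q i • σ i = ρB`, of the Bhattacharyya overlap
`∑ i, √(p i * q i)`. -/
noncomputable def compat {d : Type*} [Fintype d] [DecidableEq d]
    (ρA ρB : Matrix d d ℂ) : ℝ :=
  sSup { c : ℝ | ∃ (m : ℕ) (σ : Fin m → Matrix d d ℂ) (p q : Fin m → ℝ),
    (∀ i, IsDensityMatrix (σ i)) ∧ (∀ i, 0 ≤ p i) ∧ (∀ i, 0 ≤ q i) ∧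
    ∑ i, p i = 1 ∧ ∑ i, q i = 1 ∧
    ∑ i, p i • σ i = ρA ∧ ∑ i, q i • σ i = ρB ∧
    c = ∑ i, Real.sqrt (p i * q i) }

open scoped Classical in
/-- The positive semidefinite square root of a positive semidefinite matrix
(junk value `0` on non-PSD matrices). -/
noncomputable def psdSqrt {d : Type*} [Fintype d] [DecidableEq d]
    (A : Matrix d d ℂ) : Matrix d d ℂ :=
  if h : A.PosSemidef then
    h.1.eigenvectorUnitary.1 * diagonal ((↑) ∘ (√·) ∘ h.1.eigenvalues) *
      (star h.1.eigenvectorUnitary : Matrix d d ℂ)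
  else 0

/-- The fidelity `F(ρA, ρB) = Tr √(√ρA ρB √ρA)`. -/
noncomputable def fidelity {d : Type*} [Fintype d] [DecidableEq d]
    (ρA ρB : Matrix d d ℂ) : ℝ :=
  (psdSqrt (psdSqrt ρA * ρB * psdSqrt ρA)).trace.re

/-- The pure-state density matrix `|ψ⟩⟨ψ|` associated to a vector `ψ`. -/
def pureState {d : Type*} [Fintype d] [DecidableEq d] (ψ : d → ℂ) : Matrix d d ℂ :=
  Matrix.vecMulVec ψ (star ψ)

section Aux

variable {n : ℕ}

lemma aux_dot_pure (ψ w z : Fin n → ℂ) :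
    star w ⬝ᵥ (pureState ψ *ᵥ z) = (star w ⬝ᵥ ψ) * (star ψ ⬝ᵥ z) := by
  simp only [pureState, dotProduct, mulVec, vecMulVec_apply, Pi.star_apply,
    Finset.mul_sum, Finset.sum_mul]
  rw [Finset.sum_comm]
  exact Finset.sum_congr rfl fun i _ => Finset.sum_congr rfl fun j _ => by ring

lemma aux_pure_hermitian (ψ : Fin n → ℂ) : (pureState ψ).IsHermitian := by
  ext i j
  simp [pureState, conjTranspose_apply, vecMulVec_apply, mul_comm]

lemma aux_trace_pure (ψ : Fin n → ℂ) : (pureState ψ).trace = star ψ ⬝ᵥ ψ := by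
  simp [pureState, trace, diag, vecMulVec_apply, dotProduct, mul_comm]

lemma aux_pure_posSemidef (ψ : Fin n → ℂ) : (pureState ψ).PosSemidef := by
  refine PosSemidef.of_dotProduct_mulVec_nonneg (aux_pure_hermitian ψ) fun x => ?_
  rw [aux_dot_pure]
  have : star ψ ⬝ᵥ x = star (star x ⬝ᵥ ψ) := by
    simp [dotProduct, Finset.sum_comm, mul_comm]
  rw [this]
  exact mul_star_self_nonneg _

lemma aux_dot_star (v w : Fin n → ℂ) :
    (starRingEnd ℂ) (star v ⬝ᵥ w) = star w ⬝ᵥ v := by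
  simp [dotProduct, map_sum, mul_comm]

lemma aux_sandwich (ψ : Fin n → ℂ) (σ : Matrix (Fin n) (Fin n) ℂ) :
    pureState ψ * σ * pureState ψ = (star ψ ⬝ᵥ σ *ᵥ ψ) • pureState ψ := by
  ext i j
  simp only [Matrix.mul_apply, pureState, vecMulVec_apply, Pi.star_apply, Matrix.smul_apply,
    dotProduct, mulVec, smul_eq_mul, Finset.sum_mul, Finset.mul_sum]
  rw [Finset.sum_comm]
  exact Finset.sum_congr rfl fun k _ => Finset.sum_congr rfl fun l _ => by ring

/-- Extremality of pure states: any convex decomposition of a pure state is trivial. -/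
lemma aux_decomp_pure {m : ℕ} (ψ : Fin n → ℂ) (hψ : star ψ ⬝ᵥ ψ = 1)
    (σ : Fin m → Matrix (Fin n) (Fin n) ℂ) (p : Fin m → ℝ)
    (hσ : ∀ i, IsDensityMatrix (σ i)) (hp : ∀ i, 0 ≤ p i)
    (hs : ∑ i, p i • σ i = pureState ψ) :
    ∀ i, 0 < p i → σ i = pureState ψ := by
  intro i hpi
  have key : ∀ x : Fin n → ℂ, star ψ ⬝ᵥ x = 0 → σ i *ᵥ x = 0 := by
    intro x hx
    have h0 : ∑ j, ((p j : ℂ)) * (star x ⬝ᵥ σ j *ᵥ x) = 0 := by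
      have := congrArg (fun M => star x ⬝ᵥ M *ᵥ x) hs
      rw [aux_dot_pure, hx, mul_zero] at this
      rw [← this]
      have hms : (∑ j, p j • σ j) *ᵥ x = ∑ j, (p j • σ j) *ᵥ x :=
        map_sum (Matrix.mulVec.addMonoidHomLeft x) _ _
      rw [hms]
      have hds : star x ⬝ᵥ (∑ j, (p j • σ j) *ᵥ x) = ∑ j, star x ⬝ᵥ ((p j • σ j) *ᵥ x) := by
        simp [dotProduct, Finset.mul_sum]
        exact Finset.sum_comm
      rw [hds]
      exact Finset.sum_congr rfl fun j _ => by
        rw [smul_mulVec, dotProduct_smul]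
        simp [Complex.real_smul]
    have hnn : ∀ j ∈ Finset.univ, 0 ≤ ((p j : ℂ)) * (star x ⬝ᵥ σ j *ᵥ x) :=
      fun j _ => mul_nonneg (by exact_mod_cast hp j) ((hσ j).1.dotProduct_mulVec_nonneg x)
    have hz := (Finset.sum_eq_zero_iff_of_nonneg hnn).mp h0 i (Finset.mem_univ i)
    have hpi' : (p i : ℂ) ≠ 0 := by exact_mod_cast hpi.ne'
    have : star x ⬝ᵥ σ i *ᵥ x = 0 := by
      rcases mul_eq_zero.mp hz with h | h
      · exact absurd h hpi'
      · exact h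
    exact ((hσ i).1.dotProduct_mulVec_zero_iff x).mp this
  have hmul : σ i * (1 - pureState ψ) = 0 := by
    ext a b
    have hx : star ψ ⬝ᵥ ((1 - pureState ψ) *ᵥ Pi.single b 1) = 0 := by
      rw [Matrix.sub_mulVec, dotProduct_sub, Matrix.one_mulVec]
      have := aux_dot_pure ψ ψ (Pi.single b 1)
      rw [this, hψ, one_mul, sub_self]
    have := congrFun (key _ hx) a
    rw [Matrix.mulVec_mulVec] at this
    simpa [Matrix.mulVec_single] using this
  have h1 : σ i = σ i * pureState ψ := by
    have := hmul
    rw [Matrix.mul_sub, Matrix.mul_one, sub_eq_zero] at this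
    exact this
  have h2 : σ i = pureState ψ * σ i := by
    calc σ i = (σ i)ᴴ := (hσ i).1.1.symm
    _ = (σ i * pureState ψ)ᴴ := by rw [← h1]
    _ = (pureState ψ)ᴴ * (σ i)ᴴ := by rw [conjTranspose_mul]
    _ = pureState ψ * σ i := by rw [(aux_pure_hermitian ψ).eq, (hσ i).1.1.eq]
  have h3 : σ i = (star ψ ⬝ᵥ σ i *ᵥ ψ) • pureState ψ := by
    calc σ i = σ i * pureState ψ := h1
    _ = pureState ψ * σ i * pureState ψ := by rw [← h2]
    _ = _ := aux_sandwich ψ (σ i)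
  have htr : star ψ ⬝ᵥ σ i *ᵥ ψ = 1 := by
    have := congrArg Matrix.trace h3
    rw [(hσ i).2, Matrix.trace_smul, aux_trace_pure, hψ, smul_eq_mul, mul_one] at this
    exact this.symm
  rw [h3, htr, one_smul]

/-- Equality case of Cauchy–Schwarz for unit vectors. -/
lemma aux_pure_eq_of_abs (ψA ψB : Fin n → ℂ) (hA : star ψA ⬝ᵥ ψA = 1)
    (hB : star ψB ⬝ᵥ ψB = 1) (h : ‖star ψA ⬝ᵥ ψB‖ = 1) :
    pureState ψA = pureState ψB := by
  set c := star ψA ⬝ᵥ ψB with hc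
  have hcc : c * (starRingEnd ℂ) c = 1 := by
    rw [Complex.mul_conj]
    norm_cast
    rw [Complex.normSq_eq_norm_sq, h]; norm_num
  have hba : star ψB ⬝ᵥ ψA = (starRingEnd ℂ) c := (aux_dot_star ψA ψB).symm
  have hv : ψB - c • ψA = 0 := by
    rw [← dotProduct_star_self_eq_zero (v := ψB - c • ψA)]
    have : star (ψB - c • ψA) = star ψB - (starRingEnd ℂ) c • star ψA := by
      ext k; simp [Pi.star_apply, mul_comm]
    rw [this]
    simp only [sub_dotProduct, dotProduct_sub, smul_dotProduct, dotProduct_smul, smul_eq_mul]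
    rw [hA, hB, hba, ← hc]
    linear_combination -hcc
  have hvb : ψB = c • ψA := by rwa [sub_eq_zero] at hv
  have hps : pureState (c • ψA) = pureState ψA := by
    ext i j
    simp only [pureState, vecMulVec_apply, Pi.smul_apply, Pi.star_apply, smul_eq_mul, star_mul']
    rw [show star c = (starRingEnd ℂ) c from rfl]
    linear_combination (ψA i * star (ψA j)) * hcc
  rw [hvb, hps]

lemma aux_abs_of_pure_eq (ψA ψB : Fin n → ℂ) (hA : star ψA ⬝ᵥ ψA = 1)
    (h : pureState ψA = pureState ψB) : ‖star ψA ⬝ᵥ ψB‖ = 1 := by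
  have h1 : star ψA ⬝ᵥ (pureState ψB *ᵥ ψA) = (star ψA ⬝ᵥ ψB) * (star ψB ⬝ᵥ ψA) :=
    aux_dot_pure ψB ψA ψA
  have h2 : star ψA ⬝ᵥ (pureState ψA *ᵥ ψA) = 1 := by
    rw [aux_dot_pure, hA]; norm_num
  rw [← h, h2] at h1
  have hba : star ψB ⬝ᵥ ψA = (starRingEnd ℂ) (star ψA ⬝ᵥ ψB) := (aux_dot_star ψA ψB).symm
  rw [hba, Complex.mul_conj] at h1
  have : Complex.normSq (star ψA ⬝ᵥ ψB) = 1 := by exact_mod_cast h1.symm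
  nlinarith [Complex.sq_norm (star ψA ⬝ᵥ ψB), norm_nonneg (star ψA ⬝ᵥ ψB)]

lemma aux_sum_sqrt_le {m : ℕ} (p q : Fin m → ℝ) (hp : ∀ i, 0 ≤ p i) (hq : ∀ i, 0 ≤ q i)
    (hp1 : ∑ i, p i = 1) (hq1 : ∑ i, q i = 1) : ∑ i, Real.sqrt (p i * q i) ≤ 1 := by
  calc ∑ i, Real.sqrt (p i * q i) ≤ ∑ i, (p i + q i) / 2 := by
        apply Finset.sum_le_sum
        intro i _
        have h1 : Real.sqrt (p i * q i) ≤ Real.sqrt (((p i + q i) / 2) ^ 2) :=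
          Real.sqrt_le_sqrt (by nlinarith [sq_nonneg (p i - q i)])
        rwa [Real.sqrt_sq (by linarith [hp i, hq i])] at h1
    _ = 1 := by rw [← Finset.sum_div, Finset.sum_add_distrib, hp1, hq1]; norm_num

end Aux

/-- **P3.** For pure states, the compatibility is `1` if `|⟨ψA, ψB⟩| = 1` and
`0` otherwise. -/
theorem compat_pure_states {n : ℕ} (ψA ψB : Fin n → ℂ)
    (hA : star ψA ⬝ᵥ ψA = 1) (hB : star ψB ⬝ᵥ ψB = 1) :
    compat (pureState ψA) (pureState ψB)
      = if ‖star ψA ⬝ᵥ ψB‖ = 1 then 1 else 0 := by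
  have hρA : IsDensityMatrix (pureState ψA) :=
    ⟨aux_pure_posSemidef ψA, by rw [aux_trace_pure, hA]⟩
  have hρB : IsDensityMatrix (pureState ψB) :=
    ⟨aux_pure_posSemidef ψB, by rw [aux_trace_pure, hB]⟩
  rw [compat]
  set S : Set ℝ := { c : ℝ | ∃ (m : ℕ) (σ : Fin m → Matrix (Fin n) (Fin n) ℂ) (p q : Fin m → ℝ),
    (∀ i, IsDensityMatrix (σ i)) ∧ (∀ i, 0 ≤ p i) ∧ (∀ i, 0 ≤ q i) ∧
    ∑ i, p i = 1 ∧ ∑ i, q i = 1 ∧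
    ∑ i, p i • σ i = pureState ψA ∧ ∑ i, q i • σ i = pureState ψB ∧
    c = ∑ i, Real.sqrt (p i * q i) } with hSdef
  have hub : ∀ c ∈ S, c ≤ 1 := by
    rintro c ⟨m, σ, p, q, -, hp, hq, hp1, hq1, -, -, rfl⟩
    exact aux_sum_sqrt_le p q hp hq hp1 hq1
  have hbdd : BddAbove S := ⟨1, hub⟩
  have mem0 : (0 : ℝ) ∈ S := by
    refine ⟨2, ![pureState ψA, pureState ψB], ![1, 0], ![0, 1], ?_, ?_, ?_, ?_, ?_, ?_, ?_, ?_⟩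
    · intro i; fin_cases i <;> [exact hρA; exact hρB]
    · intro i; fin_cases i <;> norm_num
    · intro i; fin_cases i <;> norm_num
    · simp [Fin.sum_univ_two]
    · simp [Fin.sum_univ_two]
    · simp [Fin.sum_univ_two]
    · simp [Fin.sum_univ_two]
    · simp [Fin.sum_univ_two]
  split_ifs with h
  · have heq := aux_pure_eq_of_abs ψA ψB hA hB h
    have mem1 : (1 : ℝ) ∈ S := by
      refine ⟨1, fun _ => pureState ψA, fun _ => 1, fun _ => 1, fun _ => hρA,
        fun _ => zero_le_one, fun _ => zero_le_one, ?_, ?_, ?_, ?_, ?_⟩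
      · simp
      · simp
      · simp
      · simp [heq]
      · simp
    exact le_antisymm (csSup_le ⟨1, mem1⟩ hub) (le_csSup hbdd mem1)
  · have hub0 : ∀ c ∈ S, c ≤ 0 := by
      rintro c ⟨m, σ, p, q, hσ, hp, hq, hp1, hq1, hsA, hsB, rfl⟩
      have hz : ∀ i ∈ Finset.univ, Real.sqrt (p i * q i) = 0 := by
        intro i _
        rcases (hp i).lt_or_eq with hpi | hpi
        · rcases (hq i).lt_or_eq with hqi | hqi
          · exfalso
            have e1 := aux_decomp_pure ψA hA σ p hσ hp hsA i hpi
            have e2 := aux_decomp_pure ψB hB σ q hσ hq hsB i hqi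
            exact h (aux_abs_of_pure_eq ψA ψB hA (e1.symm.trans e2))
          · rw [← hqi, mul_zero, Real.sqrt_zero]
        · rw [← hpi, zero_mul, Real.sqrt_zero]
      rw [Finset.sum_eq_zero hz]
    exact le_antisymm (csSup_le ⟨0, mem0⟩ hub0) (le_csSup hbdd mem0)
end

section
/- Let ρ_A and ρ_B be density matrices on ℂ^n, let τ be a density matrix on ℂ^n, and let q_A, q_B ∈ [0,1] be such that ρ_A − q_A τ and ρ_B − q_B τ are positive semidefinite. Then C(ρ_A, ρ_B) ≥ √(q_A q_B). -/
open Matrix BigOperators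
open scoped ComplexOrder

lemma smul_posSemidef' {n : ℕ} {c : ℝ} (hc : 0 ≤ c) {A : Matrix (Fin n) (Fin n) ℂ}
    (hA : A.PosSemidef) : (c • A).PosSemidef := by
  constructor
  · unfold Matrix.IsHermitian
    rw [conjTranspose_smul, hA.1.eq]
    simp
  · intro x
    exact (hA.smul hc).2 x

lemma psd_trace_zero {n : ℕ} {M : Matrix (Fin n) (Fin n) ℂ} (hM : M.PosSemidef)
    (h : M.trace = 0) : M = 0 := by
  obtain ⟨B, rfl⟩ : ∃ B : Matrix (Fin n) (Fin n) ℂ, M = Bᴴ * B := by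
    open scoped MatrixOrder in
    exact CStarAlgebra.nonneg_iff_eq_star_mul_self.mp hM.nonneg
  have hB : B = 0 := by
    have htr : (Bᴴ * B).trace = ↑(∑ j, ∑ i, Complex.normSq (B i j)) := by
      simp [Matrix.trace, Matrix.diag, Matrix.mul_apply, Matrix.conjTranspose_apply,
        Complex.normSq_eq_conj_mul_self]
    rw [htr] at h
    have h0 : (∑ j, ∑ i, Complex.normSq (B i j)) = 0 := by exact_mod_cast h
    ext i j
    have h1 := (Finset.sum_eq_zero_iff_of_nonneg (fun j _ =>
      Finset.sum_nonneg fun i _ => Complex.normSq_nonneg _)).mp h0 j (Finset.mem_univ _)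
    have h2 := (Finset.sum_eq_zero_iff_of_nonneg (fun i _ =>
      Complex.normSq_nonneg _)).mp h1 i (Finset.mem_univ _)
    simpa using Complex.normSq_eq_zero.mp h2
  rw [hB]; simp

lemma trace_sub_smul {n : ℕ} {ρ τ : Matrix (Fin n) (Fin n) ℂ} (hρ : ρ.trace = 1)
    (hτ : τ.trace = 1) (c : ℝ) : (ρ - c • τ).trace = ((1 - c : ℝ) : ℂ) := by
  rw [Matrix.trace_sub, Matrix.trace_smul, hρ, hτ]
  push_cast
  simp [Complex.real_smul]

lemma compat_bddAbove {n : ℕ} (ρA ρB : Matrix (Fin n) (Fin n) ℂ) :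
    BddAbove { c : ℝ | ∃ (m : ℕ) (σ : Fin m → Matrix (Fin n) (Fin n) ℂ) (p q : Fin m → ℝ),
    (∀ i, IsDensityMatrix (σ i)) ∧ (∀ i, 0 ≤ p i) ∧ (∀ i, 0 ≤ q i) ∧
    ∑ i, p i = 1 ∧ ∑ i, q i = 1 ∧
    ∑ i, p i • σ i = ρA ∧ ∑ i, q i • σ i = ρB ∧
    c = ∑ i, Real.sqrt (p i * q i) } := by
  refine ⟨1, fun c hc => ?_⟩
  obtain ⟨m, σ, p, q, hσ, hp, hq, hps, hqs, hpσ, hqσ, hceq⟩ := hc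
  have key := Finset.sum_sq_le_sum_mul_sum_of_sq_eq_mul (Finset.univ : Finset (Fin m))
    (r := fun i => Real.sqrt (p i * q i)) (f := p) (g := q)
    (fun i _ => hp i) (fun i _ => hq i)
    (fun i _ => by rw [Real.sq_sqrt (mul_nonneg (hp i) (hq i))])
  rw [hps, hqs, mul_one] at key
  have hcnn : 0 ≤ c := hceq ▸ Finset.sum_nonneg fun i _ => Real.sqrt_nonneg _
  nlinarith [hceq ▸ key]

/-- **P6** (lower bound). If `ρA - qA • τ` and `ρB - qB • τ` are positive
semidefinite for a density matrix `τ`, then `C(ρA, ρB) ≥ √(qA * qB)`. -/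
theorem compat_lower_bound {n : ℕ}
    (ρA ρB τ : Matrix (Fin n) (Fin n) ℂ)
    (hA : IsDensityMatrix ρA) (hB : IsDensityMatrix ρB) (hτ : IsDensityMatrix τ)
    (qA qB : ℝ) (hqA : qA ∈ Set.Icc (0 : ℝ) 1) (hqB : qB ∈ Set.Icc (0 : ℝ) 1)
    (hA' : (ρA - qA • τ).PosSemidef) (hB' : (ρB - qB • τ).PosSemidef) :
    Real.sqrt (qA * qB) ≤ compat ρA ρB := by
  rcases hqA with ⟨hqA0, hqA1⟩
  rcases hqB with ⟨hqB0, hqB1⟩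
  -- construct the witness family
  set σ1 : Matrix (Fin n) (Fin n) ℂ :=
    if qA = 1 then τ else (1 - qA)⁻¹ • (ρA - qA • τ) with hσ1
  set σ2 : Matrix (Fin n) (Fin n) ℂ :=
    if qB = 1 then τ else (1 - qB)⁻¹ • (ρB - qB • τ) with hσ2
  have hσ1D : IsDensityMatrix σ1 := by
    rw [hσ1]
    split_ifs with h
    · exact hτ
    · have hne : (1 - qA) ≠ 0 := sub_ne_zero.mpr (Ne.symm h)
      have hpos : 0 ≤ (1 - qA)⁻¹ := inv_nonneg.mpr (by linarith)
      refine ⟨smul_posSemidef' hpos hA', ?_⟩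
      rw [Matrix.trace_smul, trace_sub_smul hA.2 hτ.2]
      rw [Complex.real_smul, ← Complex.ofReal_mul, inv_mul_cancel₀ hne]
      simp
  have hσ2D : IsDensityMatrix σ2 := by
    rw [hσ2]
    split_ifs with h
    · exact hτ
    · have hne : (1 - qB) ≠ 0 := sub_ne_zero.mpr (Ne.symm h)
      have hpos : 0 ≤ (1 - qB)⁻¹ := inv_nonneg.mpr (by linarith)
      refine ⟨smul_posSemidef' hpos hB', ?_⟩
      rw [Matrix.trace_smul, trace_sub_smul hB.2 hτ.2]
      rw [Complex.real_smul, ← Complex.ofReal_mul, inv_mul_cancel₀ hne]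
      simp
  have hsumA : qA • τ + (1 - qA) • σ1 = ρA := by
    rw [hσ1]
    split_ifs with h
    · subst h
      have h0 : (ρA - (1:ℝ) • τ).trace = 0 := by
        rw [trace_sub_smul hA.2 hτ.2]; simp
      have := psd_trace_zero hA' h0
      have hAτ : ρA = τ := by
        have := sub_eq_zero.mp this
        simpa using this
      rw [hAτ]; simp
    · have hne : (1 - qA) ≠ 0 := sub_ne_zero.mpr (Ne.symm h)
      rw [smul_smul, mul_inv_cancel₀ hne, one_smul]
      abel
  have hsumB : qB • τ + (1 - qB) • σ2 = ρB := by
    rw [hσ2]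
    split_ifs with h
    · subst h
      have h0 : (ρB - (1:ℝ) • τ).trace = 0 := by
        rw [trace_sub_smul hB.2 hτ.2]; simp
      have := psd_trace_zero hB' h0
      have hBτ : ρB = τ := by
        have := sub_eq_zero.mp this
        simpa using this
      rw [hBτ]; simp
    · have hne : (1 - qB) ≠ 0 := sub_ne_zero.mpr (Ne.symm h)
      rw [smul_smul, mul_inv_cancel₀ hne, one_smul]
      abel
  have hmem : Real.sqrt (qA * qB) ∈ { c : ℝ |
      ∃ (m : ℕ) (σ : Fin m → Matrix (Fin n) (Fin n) ℂ) (p q : Fin m → ℝ),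
      (∀ i, IsDensityMatrix (σ i)) ∧ (∀ i, 0 ≤ p i) ∧ (∀ i, 0 ≤ q i) ∧
      ∑ i, p i = 1 ∧ ∑ i, q i = 1 ∧
      ∑ i, p i • σ i = ρA ∧ ∑ i, q i • σ i = ρB ∧
      c = ∑ i, Real.sqrt (p i * q i) } := by
    refine ⟨3, ![τ, σ1, σ2], ![qA, 1 - qA, 0], ![qB, 0, 1 - qB], ?_, ?_, ?_, ?_, ?_, ?_, ?_, ?_⟩
    · intro i
      fin_cases i <;> simpa using (by first | exact hτ | exact hσ1D | exact hσ2D)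
    · intro i; fin_cases i <;> simp <;> linarith
    · intro i; fin_cases i <;> simp <;> linarith
    · simp [Fin.sum_univ_three]
    · simp [Fin.sum_univ_three]
    · rw [Fin.sum_univ_three]
      simpa using hsumA
    · rw [Fin.sum_univ_three]
      simpa using hsumB
    · rw [Fin.sum_univ_three]
      simp
  exact le_csSup (compat_bddAbove ρA ρB) hmem
end
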